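/- The function A(k) = π - π·∑_{i=1}^{∞} (1/((2i-1)(i+1)))·((2i-1)!!/(2i)!!)²·k^{2i} is monotonically decreasing on [0,1], with A(0) = π and A(1) = 8/3; consequently 8/3 ≤ A(k) ≤ π for all k ∈ [0,1]. -/

import Mathlib

open Real

noncomputable def eggArea (k : ℝ) : ℝ :=
  π - π * ∑' i : ℕ,
    1 / ((2 * (i : ℝ) + 1) * ((i : ℝ) + 2))
      * ((Nat.doubleFactorial (2 * i + 1) : ℝ) / (Nat.doubleFactorial (2 * i + 2))) ^ 2
      * k ^ (2 * (i + 1))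

open Filter Finset Topology

namespace EggAux

noncomputable def d (i : ℕ) : ℝ :=
  ((Nat.doubleFactorial (2 * i + 1) : ℝ) / (Nat.doubleFactorial (2 * i + 2))) ^ 2

noncomputable def g (i : ℕ) : ℝ :=
  1 / ((2 * (i : ℝ) + 1) * ((i : ℝ) + 2)) * d i

noncomputable def t (i : ℕ) : ℝ :=
  4 * ((i : ℝ) + 1) * (4 * i + 3) / (3 * (2 * i + 1)) * d i

lemma df_pos (n : ℕ) : (0 : ℝ) < (Nat.doubleFactorial n : ℝ) := by
  exact_mod_cast Nat.doubleFactorial_pos n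

lemma d_pos (i : ℕ) : 0 < d i := by
  unfold d
  positivity

lemma d_succ (i : ℕ) : d (i + 1) = d i * ((2 * i + 3) / (2 * i + 4)) ^ 2 := by
  unfold d
  have h1 : 2 * (i + 1) + 1 = (2 * i + 1) + 2 := by ring
  have h2 : 2 * (i + 1) + 2 = (2 * i + 2) + 2 := by ring
  rw [h1, h2, Nat.doubleFactorial_add_two, Nat.doubleFactorial_add_two]
  have h3 := (df_pos (2 * i + 1)).ne'
  have h4 := (df_pos (2 * i + 2)).ne'
  push_cast
  field_simp
  ring

lemma g_nonneg (i : ℕ) : 0 ≤ g i := by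
  unfold g d
  positivity

lemma telescope (i : ℕ) : g i = t i - t (i + 1) := by
  unfold g t
  rw [d_succ]
  have h1 : (0:ℝ) < 2 * (i:ℝ) + 1 := by positivity
  have h2 : (0:ℝ) < (i:ℝ) + 2 := by positivity
  have h3 : (0:ℝ) < 2 * (i:ℝ) + 3 := by positivity
  have h4 : (0:ℝ) < 2 * (i:ℝ) + 4 := by positivity
  push_cast
  field_simp
  ring

/-- Wallis product partial identity. -/
lemma wallis_prod (n : ℕ) :
    ∏ i ∈ range (n + 1), ((2 : ℝ) * i + 2) / (2 * i + 1) * ((2 * i + 2) / (2 * i + 3))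
      = 1 / ((2 * n + 3) * d n) := by
  induction n with
  | zero =>
    simp [d, Nat.doubleFactorial]
    norm_num
  | succ n ih =>
    rw [prod_range_succ, ih, d_succ]
    have h1 : (0:ℝ) < 2 * (n:ℝ) + 3 := by positivity
    have h2 : (0:ℝ) < 2 * (n:ℝ) + 4 := by positivity
    have h3 : (0:ℝ) < 2 * (n:ℝ) + 5 := by positivity
    have h4 := (d_pos n).ne'
    push_cast
    field_simp
    ring

lemma tendsto_d : Tendsto (fun n : ℕ => (2 * (n : ℝ) + 3) * d n) atTop (𝓝 (2 / π)) := by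
  have h : Tendsto (fun n : ℕ => 1 / ((2 * (n : ℝ) + 3) * d n)) atTop (𝓝 (π / 2)) := by
    have := Real.tendsto_prod_pi_div_two.comp (tendsto_add_atTop_nat 1)
    refine this.congr fun n => ?_
    exact wallis_prod n
  have h2 : Tendsto (fun n : ℕ => (1 / ((2 * (n : ℝ) + 3) * d n))⁻¹) atTop (𝓝 ((π / 2)⁻¹)) :=
    h.inv₀ (by positivity)
  have h3 : (π / 2)⁻¹ = 2 / π := by field_simp
  rw [h3] at h2
  refine h2.congr fun n => ?_
  simp

lemma lin_ratio (a b c e : ℝ) (hc : 0 < c) :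
    Tendsto (fun n : ℕ => (a * n + b) / (c * n + e)) atTop (𝓝 (a / c)) := by
  have hdiv : Tendsto (fun n : ℕ => (a + b * (1 / n)) / (c + e * (1 / n))) atTop
      (𝓝 ((a + b * 0) / (c + e * 0))) := by
    refine Tendsto.div ?_ ?_ (by simpa using hc.ne')
    · exact tendsto_const_nhds.add (tendsto_one_div_atTop_nhds_zero_nat.const_mul b)
    · exact tendsto_const_nhds.add (tendsto_one_div_atTop_nhds_zero_nat.const_mul e)
  simp only [mul_zero, add_zero] at hdiv
  have hev : ∀ᶠ n : ℕ in atTop, (0:ℝ) < c * n + e := by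
    have h := (tendsto_natCast_atTop_atTop (R := ℝ).const_mul_atTop hc).atTop_add
        (tendsto_const_nhds (x := e))
    exact h.eventually_gt_atTop 0
  refine hdiv.congr' ?_
  filter_upwards [eventually_ge_atTop 1, hev] with n hn hy
  have hn' : (n : ℝ) ≠ 0 := by
    have : n ≠ 0 := by omega
    exact_mod_cast this
  have hy' : c + e * (1 / (n : ℝ)) ≠ 0 := by
    have heq : c + e * (1 / (n : ℝ)) = (c * n + e) / n := by field_simp
    rw [heq]
    exact div_ne_zero hy.ne' hn'
  rw [div_eq_div_iff hy' hy.ne']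
  field_simp

lemma tendsto_t : Tendsto t atTop (𝓝 (8 / (3 * π))) := by
  have key : ∀ n : ℕ, t n
      = ((4 * (n:ℝ) + 4) / (2 * n + 1)) * ((4 * (n:ℝ) + 3) / (3 * (2 * n + 3)))
        * ((2 * (n:ℝ) + 3) * d n) := by
    intro n
    unfold t
    have h1 : (0:ℝ) < 2 * (n:ℝ) + 1 := by positivity
    have h3 : (0:ℝ) < 2 * (n:ℝ) + 3 := by positivity
    field_simp
  have h1 : Tendsto (fun n : ℕ => (4 * (n:ℝ) + 4) / (2 * n + 1)) atTop (𝓝 (4 / 2)) :=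
    lin_ratio 4 4 2 1 (by norm_num)
  have h2 : Tendsto (fun n : ℕ => (4 * (n:ℝ) + 3) / (3 * (2 * n + 3))) atTop (𝓝 (4 / 6)) := by
    have := lin_ratio 4 3 6 9 (by norm_num)
    refine this.congr fun n => ?_
    ring_nf
  have := (h1.mul h2).mul tendsto_d
  have heq : 4 / 2 * (4 / 6) * (2 / π) = 8 / (3 * π) := by
    field_simp
    ring
  rw [heq] at this
  exact this.congr fun n => (key n).symm

lemma t_zero : t 0 = 1 := by
  simp [t, d, Nat.doubleFactorial]
  norm_num

lemma hasSum_g : HasSum g (1 - 8 / (3 * π)) := by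
  rw [hasSum_iff_tendsto_nat_of_nonneg g_nonneg]
  have : ∀ n : ℕ, ∑ i ∈ range n, g i = t 0 - t n := by
    intro n
    calc ∑ i ∈ range n, g i = ∑ i ∈ range n, (t i - t (i + 1)) := by
          exact sum_congr rfl fun i _ => telescope i
      _ = t 0 - t n := sum_range_sub' t n
  refine Tendsto.congr (fun n => (this n).symm) ?_
  rw [t_zero]
  exact (tendsto_const_nhds (x := (1:ℝ))).sub tendsto_t

lemma summable_g : Summable g := hasSum_g.summable

lemma eggArea_eq (k : ℝ) : eggArea k = π - π * ∑' i : ℕ, g i * k ^ (2 * (i + 1)) := by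
  unfold eggArea g d
  simp [mul_assoc]

lemma summable_gk {k : ℝ} (h0 : 0 ≤ k) (h1 : k ≤ 1) :
    Summable (fun i => g i * k ^ (2 * (i + 1))) := by
  refine Summable.of_nonneg_of_le (fun i => mul_nonneg (g_nonneg i) (pow_nonneg h0 _)) (fun i => ?_) summable_g
  calc g i * k ^ (2 * (i + 1)) ≤ g i * 1 := by
        refine mul_le_mul_of_nonneg_left ?_ (g_nonneg i)
        exact pow_le_one₀ h0 h1
    _ = g i := mul_one _

lemma tsum_mono {k₁ k₂ : ℝ} (h0 : 0 ≤ k₁) (h12 : k₁ ≤ k₂) (h1 : k₂ ≤ 1) :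
    (∑' i : ℕ, g i * k₁ ^ (2 * (i + 1))) ≤ ∑' i : ℕ, g i * k₂ ^ (2 * (i + 1)) := by
  refine Summable.tsum_le_tsum (fun i => ?_) (summable_gk h0 (h12.trans h1)) (summable_gk (h0.trans h12) h1)
  exact mul_le_mul_of_nonneg_left (pow_le_pow_left₀ h0 h12 _) (g_nonneg i)

end EggAux

open EggAux in
theorem eggArea_antitone_and_bounds :
    AntitoneOn eggArea (Set.Icc 0 1) ∧ eggArea 0 = π ∧ eggArea 1 = 8 / 3
      ∧ ∀ k ∈ Set.Icc (0:ℝ) 1, 8 / 3 ≤ eggArea k ∧ eggArea k ≤ π := by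
  have hanti : AntitoneOn eggArea (Set.Icc 0 1) := by
    intro k₁ hk₁ k₂ hk₂ h12
    rw [eggArea_eq, eggArea_eq]
    have := tsum_mono hk₁.1 h12 hk₂.2
    nlinarith [Real.pi_pos]
  have h0 : eggArea 0 = π := by
    rw [eggArea_eq]
    have : ∀ i : ℕ, g i * (0:ℝ) ^ (2 * (i + 1)) = 0 := by
      intro i
      rw [zero_pow (by omega), mul_zero]
    rw [tsum_congr this, tsum_zero, mul_zero, sub_zero]
  have h1 : eggArea 1 = 8 / 3 := by
    rw [eggArea_eq]
    have : ∀ i : ℕ, g i * (1:ℝ) ^ (2 * (i + 1)) = g i := by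
      intro i; rw [one_pow, mul_one]
    rw [tsum_congr this, hasSum_g.tsum_eq]
    have hπ := Real.pi_ne_zero
    field_simp
    ring
  refine ⟨hanti, h0, h1, fun k hk => ?_⟩
  constructor
  · rw [← h1]
    exact hanti hk (Set.mem_Icc.mpr ⟨zero_le_one, le_refl 1⟩) hk.2
  · rw [← h0]
    exact hanti (Set.mem_Icc.mpr ⟨le_refl 0, zero_le_one⟩) hk hk.1
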